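/- For every n ≥ 1, the n-th derivative of the logistic sigmoid σ(x) = 1/(1+e^{−x}) satisfies the sharper bound |σ^{(n)}(x)| ≤ (n^n / (n+1)^{n+1}) · n! for all real x. -/

import Mathlib

open Real

/-- The logistic _root_.sigmoid function. -/
noncomputable def sigmoid (x : ℝ) : ℝ := 1 / (1 + Real.exp (-x))

lemma sigmoid_pos (x : ℝ) : 0 < _root_.sigmoid x := by
  unfold _root_.sigmoid; positivity

lemma sigmoid_lt_one (x : ℝ) : _root_.sigmoid x < 1 := by
  unfold _root_.sigmoid
  rw [div_lt_one (by positivity)]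
  linarith [Real.exp_pos (-x)]

lemma hasDerivAt_sigmoid (x : ℝ) :
    HasDerivAt _root_.sigmoid (_root_.sigmoid x * (1 - _root_.sigmoid x)) x := by
  have h : HasDerivAt (fun x : ℝ => 1 + Real.exp (-x)) (-Real.exp (-x)) x := by
    have := ((hasDerivAt_id x).neg.exp).const_add 1
    simpa using this
  have hne : (1 + Real.exp (-x)) ≠ 0 := by positivity
  have h2 := (hasDerivAt_const x (1:ℝ)).fun_div h hne
  refine h2.congr_deriv ?_
  unfold _root_.sigmoid
  field_simp
  ring

/-- Unsigned Eulerian-type coefficients. -/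
def ec : ℕ → ℕ → ℕ
  | 0, k => if k = 1 then 1 else 0
  | n+1, k => k * ec n k + (n + 2 - k) * ec n (k - 1)

lemma ec_zero : ∀ n, ec n 0 = 0
  | 0 => rfl
  | n+1 => by simp [ec, ec_zero n]

lemma ec_eq_zero_of_ge : ∀ n k, n + 2 ≤ k → ec n k = 0
  | 0, k, h => by
    have : k ≠ 1 := by omega
    simp [ec, this]
  | n+1, k, h => by
    have h1 : ec n k = 0 := ec_eq_zero_of_ge n k (by omega)
    have h2 : ec n (k-1) = 0 := ec_eq_zero_of_ge n (k-1) (by omega)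
    simp [ec, h1, h2]

lemma ec_succ_self (n : ℕ) : ec (n+1) (n+2) = 0 := by
  have h1 : ec n (n+2) = 0 := ec_eq_zero_of_ge n (n+2) (by omega)
  show (n+2) * ec n (n+2) + (n + 2 - (n+2)) * ec n (n+2-1) = 0
  simp [h1]

lemma sum_ec : ∀ n, ∑ k ∈ Finset.range (n+2), ec n k = n.factorial
  | 0 => by decide
  | n+1 => by
    have e1 : ∑ k ∈ Finset.range (n+3), k * ec n k
        = ∑ k ∈ Finset.range (n+2), k * ec n k := by
      rw [Finset.sum_range_succ, ec_eq_zero_of_ge n (n+2) (by omega)]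
      simp
    have e2 : ∑ k ∈ Finset.range (n+3), (n + 2 - k) * ec n (k - 1)
        = ∑ k ∈ Finset.range (n+2), (n + 1 - k) * ec n k := by
      rw [Finset.sum_range_succ']
      rw [show (0:ℕ) - 1 = 0 from rfl, ec_zero n]
      simp only [Nat.mul_zero, add_zero, Nat.add_sub_cancel]
      exact Finset.sum_congr rfl fun k _ => by congr 1 <;> omega
    calc ∑ k ∈ Finset.range (n+3), ec (n+1) k
        = ∑ k ∈ Finset.range (n+3), (k * ec n k + (n + 2 - k) * ec n (k - 1)) := rfl
      _ = (∑ k ∈ Finset.range (n+3), k * ec n k)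
          + ∑ k ∈ Finset.range (n+3), (n + 2 - k) * ec n (k - 1) := by
          rw [Finset.sum_add_distrib]
      _ = (∑ k ∈ Finset.range (n+2), k * ec n k)
          + ∑ k ∈ Finset.range (n+2), (n + 1 - k) * ec n k := by rw [e1, e2]
      _ = ∑ k ∈ Finset.range (n+2), (n + 1) * ec n k := by
          rw [← Finset.sum_add_distrib]
          refine Finset.sum_congr rfl fun k hk => ?_
          have : k ≤ n + 1 := by have := Finset.mem_range.mp hk; omega
          rw [← add_mul]
          congr 1
          omega
      _ = (n+1) * n.factorial := by rw [← Finset.mul_sum, sum_ec n]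
      _ = (n+1).factorial := (Nat.factorial_succ n).symm

/-- The polynomial expression for the n-th derivative of _root_.sigmoid. -/
noncomputable def sigP (n : ℕ) (x : ℝ) : ℝ :=
  ∑ k ∈ Finset.range (n+2),
    (-1:ℝ)^(k+1) * (ec n k : ℝ) * _root_.sigmoid x ^ k * (1 - _root_.sigmoid x) ^ (n+1-k)

lemma hasDerivAt_term (k m : ℕ) (x : ℝ) :
    HasDerivAt (fun x => _root_.sigmoid x ^ k * (1 - _root_.sigmoid x) ^ m)
      ((k:ℝ) * _root_.sigmoid x ^ k * (1 - _root_.sigmoid x) ^ (m+1)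
        - (m:ℝ) * _root_.sigmoid x ^ (k+1) * (1 - _root_.sigmoid x) ^ m) x := by
  have hs := _root_.hasDerivAt_sigmoid x
  have ht : HasDerivAt (fun x => 1 - _root_.sigmoid x) (-(_root_.sigmoid x * (1 - _root_.sigmoid x))) x := by
    simpa using (hasDerivAt_const x (1:ℝ)).fun_sub hs
  have h := (hs.fun_pow k).fun_mul (ht.fun_pow m)
  refine h.congr_deriv ?_
  rcases k with _|k <;> rcases m with _|m <;>
    simp [pow_succ, Nat.succ_sub_one] <;> ring

lemma hasDerivAt_sigP (n : ℕ) (x : ℝ) : HasDerivAt (sigP n) (sigP (n+1) x) x := by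
  set σ := _root_.sigmoid x with hσ
  have h : HasDerivAt (sigP n)
      (∑ k ∈ Finset.range (n+2), (-1:ℝ)^(k+1) * (ec n k : ℝ) *
        ((k:ℝ) * σ ^ k * (1 - σ) ^ (n+1-k+1)
          - ((n+1-k : ℕ):ℝ) * σ ^ (k+1) * (1 - σ) ^ (n+1-k))) x := by
    apply HasDerivAt.fun_sum
    intro k hk
    have := (hasDerivAt_term k (n+1-k) x).const_mul ((-1:ℝ)^(k+1) * (ec n k : ℝ))
    simpa [hσ, mul_assoc] using this
  convert h using 1
  set g : ℕ → ℝ := fun k =>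
      (-1:ℝ)^(k+1) * (k:ℝ) * (ec n k : ℝ) * σ ^ k * (1 - σ) ^ (n+2-k) with hg
  set f : ℕ → ℝ := fun k =>
      (-1:ℝ)^(k+1) * ((n+2-k : ℕ):ℝ) * (ec n (k-1) : ℝ) * σ ^ k * (1 - σ) ^ (n+2-k) with hf
  have hterm : ∀ k ∈ Finset.range (n+2),
      (-1:ℝ)^(k+1) * (ec n k : ℝ) *
        ((k:ℝ) * σ ^ k * (1 - σ) ^ (n+1-k+1)
          - ((n+1-k : ℕ):ℝ) * σ ^ (k+1) * (1 - σ) ^ (n+1-k)) = g k + f (k+1) := by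
    intro k hk
    have hk' : k ≤ n + 1 := by have := Finset.mem_range.mp hk; omega
    have hk1 : n+1-k+1 = n+2-k := by omega
    have hk2 : n+2-(k+1) = n+1-k := by omega
    rw [hk1]
    simp only [hg, hf, hk2, Nat.add_sub_cancel, pow_succ]
    ring
  calc sigP (n+1) x
      = ∑ k ∈ Finset.range (n+3),
          (-1:ℝ)^(k+1) * (ec (n+1) k : ℝ) * σ ^ k * (1 - σ) ^ (n+2-k) := rfl
    _ = ∑ k ∈ Finset.range (n+3), (g k + f k) := by
        refine Finset.sum_congr rfl fun k _ => ?_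
        have hrec : ec (n+1) k = k * ec n k + (n + 2 - k) * ec n (k - 1) := rfl
        rw [hrec]
        simp only [hg, hf, Nat.cast_add, Nat.cast_mul]
        ring
    _ = (∑ k ∈ Finset.range (n+3), g k) + ∑ k ∈ Finset.range (n+3), f k := by
        rw [Finset.sum_add_distrib]
    _ = (∑ k ∈ Finset.range (n+2), g k) + ∑ k ∈ Finset.range (n+2), f (k+1) := by
        have hz1 : ec n (n+2) = 0 := ec_eq_zero_of_ge n (n+2) (by omega)
        have hz2 : ec n ((0:ℕ)-1) = 0 := ec_zero n
        have hgsum : ∑ k ∈ Finset.range (n+3), g k = ∑ k ∈ Finset.range (n+2), g k := by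
          rw [Finset.sum_range_succ]
          simp [hg, hz1]
        have hfsum : ∑ k ∈ Finset.range (n+3), f k = ∑ k ∈ Finset.range (n+2), f (k+1) := by
          rw [Finset.sum_range_succ']
          have : f 0 = 0 := by simp [hf, hz2, ec_zero]
          rw [this, add_zero]
        rw [hgsum, hfsum]
    _ = ∑ k ∈ Finset.range (n+2),
          ((-1:ℝ)^(k+1) * (ec n k : ℝ) *
            ((k:ℝ) * σ ^ k * (1 - σ) ^ (n+1-k+1)
              - ((n+1-k : ℕ):ℝ) * σ ^ (k+1) * (1 - σ) ^ (n+1-k))) := by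
        rw [← Finset.sum_add_distrib]
        exact (Finset.sum_congr rfl hterm).symm

lemma iteratedDeriv_sigmoid_eq (n : ℕ) : iteratedDeriv n _root_.sigmoid = sigP n := by
  induction n with
  | zero =>
    funext x
    simp [iteratedDeriv_zero, sigP, Finset.sum_range_succ, ec]
  | succ n ih =>
    funext x
    rw [iteratedDeriv_succ, ih]
    exact (hasDerivAt_sigP n x).deriv

lemma keyA (k m : ℕ) (hk : 1 ≤ k) (hm : 1 ≤ m) {y : ℝ} (h0 : 0 ≤ y) (h1 : y ≤ 1) :
    y ^ k * (1 - y) ^ m ≤ (k:ℝ)^k * (m:ℝ)^m / ((k:ℝ)+(m:ℝ))^(k+m) := by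
  have hkpos : (0:ℝ) < k := by exact_mod_cast hk
  have hmpos : (0:ℝ) < m := by exact_mod_cast hm
  have hy' : 0 ≤ 1 - y := by linarith
  set N : ℝ := (k:ℝ) + (m:ℝ) with hN
  have hNpos : 0 < N := by positivity
  set w₁ : ℝ := (k:ℝ)/N with hw₁
  set w₂ : ℝ := (m:ℝ)/N with hw₂
  set p₁ : ℝ := N * y / k with hp₁
  set p₂ : ℝ := N * (1-y) / m with hp₂
  have hw : w₁ + w₂ = 1 := by rw [hw₁, hw₂]; field_simp; linarith
  have hp₁0 : 0 ≤ p₁ := by positivity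
  have hp₂0 : 0 ≤ p₂ := by positivity
  have key := Real.geom_mean_le_arith_mean2_weighted
    (by positivity : (0:ℝ) ≤ w₁) (by positivity : (0:ℝ) ≤ w₂) hp₁0 hp₂0 hw
  have hsum : w₁ * p₁ + w₂ * p₂ = 1 := by
    rw [hw₁, hw₂, hp₁, hp₂]
    field_simp
    ring
  rw [hsum] at key
  have key2 : (p₁ ^ w₁ * p₂ ^ w₂) ^ (k+m) ≤ 1 := by
    calc (p₁ ^ w₁ * p₂ ^ w₂) ^ (k+m) ≤ 1 ^ (k+m) :=
          pow_le_pow_left₀ (by positivity) key _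
      _ = 1 := one_pow _
  have hexp : (p₁ ^ w₁ * p₂ ^ w₂) ^ (k+m) = p₁ ^ k * p₂ ^ m := by
    rw [mul_pow]
    rw [← Real.rpow_natCast (p₁ ^ w₁) (k+m), ← Real.rpow_natCast (p₂ ^ w₂) (k+m)]
    rw [← Real.rpow_mul hp₁0, ← Real.rpow_mul hp₂0]
    have e₁ : w₁ * ((k+m : ℕ):ℝ) = (k:ℕ) := by
      rw [hw₁]
      push_cast
      field_simp
      linarith
    have e₂ : w₂ * ((k+m : ℕ):ℝ) = (m:ℕ) := by
      rw [hw₂]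
      push_cast
      field_simp
      linarith
    rw [e₁, e₂, Real.rpow_natCast, Real.rpow_natCast]
  rw [hexp] at key2
  have expand : p₁ ^ k * p₂ ^ m
      = N ^ (k+m) * (y ^ k * (1-y) ^ m) / ((k:ℝ)^k * (m:ℝ)^m) := by
    rw [hp₁, hp₂, div_pow, div_pow, mul_pow, mul_pow]
    field_simp
    ring
  rw [expand, div_le_one (by positivity)] at key2
  rw [le_div_iff₀ (by positivity : (0:ℝ) < N ^ (k+m))]
  nlinarith [key2]

lemma keyB (n k m : ℕ) (hk : 1 ≤ k) (hm : 1 ≤ m) (hkm : k + m = n + 1) :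
    (k:ℝ)^k * (m:ℝ)^m ≤ (n:ℝ)^n := by
  have hn : 1 ≤ n := by omega
  have hkn : k ≤ n := by omega
  have hkR : (1:ℝ) ≤ (k:ℝ) := by exact_mod_cast hk
  have hnR : (1:ℝ) ≤ (n:ℝ) := by exact_mod_cast hn
  have hknR : (k:ℝ) ≤ (n:ℝ) := by exact_mod_cast hkn
  have hmR : (n:ℝ) + 1 - (k:ℝ) = (m:ℝ) := by
    have : (k:ℝ) + (m:ℝ) = (n:ℝ) + 1 := by exact_mod_cast hkm
    linarith
  set N : ℝ := (n:ℝ) + 1 with hNdef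
  -- convexity of g x = x log x + (N-x) log (N-x) on Icc 0 N
  have f₁ : ConvexOn ℝ (Set.Icc (0:ℝ) N) (fun x => x * Real.log x) :=
    Real.convexOn_mul_log.subset Set.Icc_subset_Ici_self (convex_Icc _ _)
  have f₂ : ConvexOn ℝ (Set.Icc (0:ℝ) N) (fun x => (N - x) * Real.log (N - x)) := by
    refine ⟨convex_Icc _ _, fun u hu v hv a b ha hb hab => ?_⟩
    have harg : N - (a • u + b • v) = a • (N - u) + b • (N - v) := by
      simp only [smul_eq_mul]
      linear_combination (-N) * hab
    have hu' : N - u ∈ Set.Ici (0:ℝ) := by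
      simp only [Set.mem_Ici]; linarith [hu.2]
    have hv' : N - v ∈ Set.Ici (0:ℝ) := by
      simp only [Set.mem_Ici]; linarith [hv.2]
    show (N - (a • u + b • v)) * Real.log (N - (a • u + b • v))
        ≤ a • ((N - u) * Real.log (N - u)) + b • ((N - v) * Real.log (N - v))
    rw [harg]
    exact Real.convexOn_mul_log.2 hu' hv' ha hb hab
  have g_cvx := f₁.add f₂
  have h1mem : (1:ℝ) ∈ Set.Icc (0:ℝ) N := by constructor <;> [norm_num; linarith]
  have hnmem : (n:ℝ) ∈ Set.Icc (0:ℝ) N := by constructor <;> [positivity; linarith]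
  -- write k as a convex combination of 1 and n
  rcases eq_or_lt_of_le hn with h1 | h2
  · -- n = 1 : then k = m = 1
    have hk1 : k = 1 := by omega
    have hm1 : m = 1 := by omega
    subst hk1 hm1
    have : n = 1 := h1.symm
    subst this
    norm_num
  · have hn2R : (1:ℝ) < (n:ℝ) := by exact_mod_cast h2
    set a : ℝ := ((n:ℝ) - (k:ℝ))/((n:ℝ) - 1) with hadef
    set b : ℝ := ((k:ℝ) - 1)/((n:ℝ) - 1) with hbdef
    have hden : (0:ℝ) < (n:ℝ) - 1 := by linarith
    have ha : 0 ≤ a := by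
      apply div_nonneg _ hden.le; linarith
    have hb : 0 ≤ b := by
      apply div_nonneg _ hden.le; linarith
    have hab : a + b = 1 := by
      rw [hadef, hbdef, ← add_div]
      field_simp
      ring
    have hcomb : a • (1:ℝ) + b • (n:ℝ) = (k:ℝ) := by
      simp only [smul_eq_mul, hadef, hbdef]
      field_simp
      ring
    have hmax := g_cvx.le_on_segment' h1mem hnmem ha hb hab
    rw [hcomb] at hmax
    have hg1 : (1:ℝ) * Real.log 1 + (N - 1) * Real.log (N - 1)
        = (n:ℝ) * Real.log (n:ℝ) := by
      have : N - 1 = (n:ℝ) := by rw [hNdef]; ring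
      rw [this]
      simp
    have hgn : (n:ℝ) * Real.log (n:ℝ) + (N - (n:ℝ)) * Real.log (N - (n:ℝ))
        = (n:ℝ) * Real.log (n:ℝ) := by
      have : N - (n:ℝ) = 1 := by rw [hNdef]; ring
      rw [this]
      simp
    simp only [Pi.add_apply] at hmax
    rw [hg1, hgn, max_self] at hmax
    -- hmax : k * log k + (N - k) * log (N - k) ≤ n * log n
    rw [hmR] at hmax
    have hlog : Real.log ((k:ℝ)^k * (m:ℝ)^m) ≤ Real.log ((n:ℝ)^n) := by
      rw [Real.log_mul (by positivity) (by positivity), Real.log_pow, Real.log_pow,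
        Real.log_pow]
      push_cast
      linarith [hmax]
    exact (Real.log_le_log_iff (by positivity) (by positivity)).mp hlog

lemma keyMain (n k : ℕ) (hk : 1 ≤ k) (hkn : k ≤ n) {y : ℝ} (h0 : 0 ≤ y) (h1 : y ≤ 1) :
    y ^ k * (1 - y) ^ (n+1-k) ≤ (n:ℝ)^n / ((n:ℝ)+1)^(n+1) := by
  set m := n + 1 - k with hm
  have hm1 : 1 ≤ m := by omega
  have hkm : k + m = n + 1 := by omega
  have hcast : (k:ℝ) + (m:ℝ) = (n:ℝ) + 1 := by exact_mod_cast hkm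
  calc y ^ k * (1 - y) ^ m ≤ (k:ℝ)^k * (m:ℝ)^m / ((k:ℝ)+(m:ℝ))^(k+m) :=
        keyA k m hk hm1 h0 h1
    _ = (k:ℝ)^k * (m:ℝ)^m / ((n:ℝ)+1)^(n+1) := by rw [hcast, hkm]
    _ ≤ (n:ℝ)^n / ((n:ℝ)+1)^(n+1) := by
        gcongr
        exact keyB n k m hk hm1 hkm

/-- For every `n ≥ 1`, `|σ^{(n)}(x)| ≤ (n^n / (n+1)^{n+1})·n!` for all real `x`. -/
theorem abs_iteratedDeriv_sigmoid_le_sharp (n : ℕ) (hn : 1 ≤ n) (x : ℝ) :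
    |iteratedDeriv n _root_.sigmoid x|
      ≤ ((n : ℝ) ^ n / ((n : ℝ) + 1) ^ (n + 1)) * (n.factorial : ℝ) := by
  rw [iteratedDeriv_sigmoid_eq n]
  have h0 : 0 < _root_.sigmoid x := sigmoid_pos x
  have h1 : _root_.sigmoid x < 1 := sigmoid_lt_one x
  set σ := _root_.sigmoid x with hσ
  have hτ : (0:ℝ) ≤ 1 - σ := by linarith
  set M : ℝ := (n:ℝ)^n / ((n:ℝ)+1)^(n+1) with hM
  have hM0 : 0 ≤ M := by positivity
  calc |sigP n x|
      ≤ ∑ k ∈ Finset.range (n+2),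
          |(-1:ℝ)^(k+1) * (ec n k : ℝ) * σ ^ k * (1 - σ) ^ (n+1-k)| :=
        Finset.abs_sum_le_sum_abs _ _
    _ = ∑ k ∈ Finset.range (n+2), (ec n k : ℝ) * (σ ^ k * (1 - σ) ^ (n+1-k)) := by
        refine Finset.sum_congr rfl fun k _ => ?_
        rw [abs_mul, abs_mul, abs_mul, abs_pow, abs_neg, abs_one, one_pow, one_mul,
          abs_of_nonneg (Nat.cast_nonneg _), abs_of_nonneg (pow_nonneg h0.le _),
          abs_of_nonneg (pow_nonneg hτ _), mul_assoc]
    _ ≤ ∑ k ∈ Finset.range (n+2), (ec n k : ℝ) * M := by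
        refine Finset.sum_le_sum fun k hk => ?_
        by_cases hzero : ec n k = 0
        · simp [hzero]
        · have hk1 : 1 ≤ k := by
            rcases Nat.eq_zero_or_pos k with h | h
            · exact absurd (h ▸ ec_zero n) hzero
            · exact h
          have hkn : k ≤ n := by
            by_contra hcon
            push_neg at hcon
            have hk2 : k = n + 1 := by
              have := Finset.mem_range.mp hk; omega
            rcases n with _ | n'
            · omega
            · exact hzero (hk2 ▸ ec_succ_self n')
          exact mul_le_mul_of_nonneg_left (keyMain n k hk1 hkn h0.le h1.le)
            (Nat.cast_nonneg _)
    _ = (∑ k ∈ Finset.range (n+2), (ec n k : ℝ)) * M := by rw [← Finset.sum_mul]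
    _ = (n.factorial : ℝ) * M := by
        rw [← Nat.cast_sum, sum_ec n]
    _ = M * (n.factorial : ℝ) := mul_comm _ _
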